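/- Let F be a field of characteristic 2 and A = (a_{ij}) a 3×3 matrix over F. The determinant of the 4×4 matrix whose rows are f = (a_{21}a_{31}, a_{31}(a_{21}a_{33}+a_{23}a_{31}), a_{21}(a_{21}a_{32}+a_{22}a_{31}), (a_{21}a_{33}+a_{23}a_{31})(a_{21}a_{32}+a_{22}a_{31})), e1 = (0, 0, a_{12}, a_{12}a_{33}+a_{13}a_{32}), e2 = (0, a_{13}, 0, a_{12}a_{23}+a_{13}a_{22}), e3 = (1, a_{33}, a_{22}, a_{22}a_{33}+a_{23}a_{32}) equals (a_{12}a_{23}a_{31} − a_{13}a_{32}a_{21})^2. -/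

import Mathlib

theorem stmt_7 (F : Type*) [Field F] [CharP F 2] (A : Matrix (Fin 3) (Fin 3) F) :
    Matrix.det
      !![A 1 0 * A 2 0,
         A 2 0 * (A 1 0 * A 2 2 + A 1 2 * A 2 0),
         A 1 0 * (A 1 0 * A 2 1 + A 1 1 * A 2 0),
         (A 1 0 * A 2 2 + A 1 2 * A 2 0) * (A 1 0 * A 2 1 + A 1 1 * A 2 0);
         0, 0, A 0 1, A 0 1 * A 2 2 + A 0 2 * A 2 1;
         0, A 0 2, 0, A 0 1 * A 1 2 + A 0 2 * A 1 1;
         1, A 2 2, A 1 1, A 1 1 * A 2 2 + A 1 2 * A 2 1]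
      = (A 0 1 * A 1 2 * A 2 0 - A 0 2 * A 2 1 * A 1 0) ^ 2 := by
  have h2 : (2:F) = 0 := by
    exact_mod_cast CharP.cast_eq_zero F 2
  have hc : (Fin.castSucc 2 : Fin 4) = 2 := rfl
  have hs : Fin.succAbove (3 : Fin 4) (2 : Fin 3) = 2 := rfl
  simp [Matrix.det_succ_column_zero, Fin.sum_univ_succ, Matrix.det_fin_three, hc, hs]
  linear_combination ((-1)*(A 0 1*A 0 1*A 1 2*A 1 2*A 2 0*A 2 0) + (-1)*(A 0 2*A 0 2*A 1 0*A 1 0*A 2 1*A 2 1) + (1)*(A 0 1*A 0 2*A 1 0*A 1 2*A 2 0*A 2 1)) * h2
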